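/- Every connected graph G with at least 2 vertices has a connecting transition set of size |V(G)| − 2. -/

import Mathlib

variable {V : Type*}

/-- The transition consisting of the edges `ab` and `bc`, written `abc`. -/
def transitionOf (a b c : V) : Sym2 (Sym2 V) := s(s(a, b), s(b, c))

/-- `t` is a transition of `G`: an unordered pair of two distinct adjacent edges. -/
def SimpleGraph.IsTransition (G : SimpleGraph V) (t : Sym2 (Sym2 V)) : Prop :=
  ∃ a b c, G.Adj a b ∧ G.Adj b c ∧ a ≠ c ∧ t = transitionOf a b c

/-- A list of vertices (the support of a walk) is `T`-compatible: every pair of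
consecutive edges is either a transition of `T` or a backtrack. -/
def TCompatible (T : Set (Sym2 (Sym2 V))) (l : List V) : Prop :=
  ∀ (i : ℕ) (h : i + 2 < l.length),
    l[i]'(by omega) = l[i + 2]'h ∨
    transitionOf (l[i]'(by omega)) (l[i + 1]'(by omega)) (l[i + 2]'h) ∈ T

/-- `G` is `T`-connected: every two vertices are joined by a `T`-compatible walk. -/
def SimpleGraph.TConnected (G : SimpleGraph V) (T : Set (Sym2 (Sym2 V))) : Prop :=
  ∀ u v : V, ∃ p : G.Walk u v, TCompatible T p.support

/-- `T` is a connecting transition set of `G`. -/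
def SimpleGraph.ConnectingTransitionSet (G : SimpleGraph V)
    (T : Finset (Sym2 (Sym2 V))) : Prop :=
  (∀ t ∈ T, G.IsTransition t) ∧ G.TConnected ↑T

/-- `H` is a connecting hypergraph of `G`: every hyperedge has at least two vertices and
induces a connected subgraph, and every pair of distinct non-adjacent vertices is
contained in a common hyperedge. -/
def SimpleGraph.ConnectingHypergraph (G : SimpleGraph V) (H : Finset (Finset V)) : Prop :=
  (∀ E ∈ H, 2 ≤ E.card ∧ (G.induce (E : Set V)).Connected) ∧
  ∀ u v : V, u ≠ v → ¬G.Adj u v → ∃ E ∈ H, u ∈ E ∧ v ∈ E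

/-- The cost of a hypergraph: the sum over hyperedges of (size − 2). -/
def hcost (H : Finset (Finset V)) : ℕ := ∑ E ∈ H, (E.card - 2)

/-- The quantity τ(G): the sum over co-connected components `C` of `G` with `|C| ≥ 2`
of `|C| − 2` if `G[C]` is connected and `|C| − 1` otherwise. -/
noncomputable def tau {V : Type*} [Fintype V] (G : SimpleGraph V) : ℕ := by
  classical
  haveI : Fintype Gᶜ.ConnectedComponent := Fintype.ofFinite _
  exact ∑ C : Gᶜ.ConnectedComponent,
    if 2 ≤ C.supp.ncard then
      (if (G.induce C.supp).Connected then C.supp.ncard - 2 else C.supp.ncard - 1)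
    else 0


section AuxTransition

variable {V : Type*}

lemma transitionOf_comm' (a b c : V) : transitionOf a b c = transitionOf c b a := by
  unfold transitionOf
  rw [show s(c, b) = s(b, c) from Sym2.eq_swap, show s(b, a) = s(a, b) from Sym2.eq_swap,
    Sym2.eq_swap]

lemma transitionOf_inj' {a b c d v : V} (hav : a ≠ v) (hbv : b ≠ v) (hcv : c ≠ v) (hdv : d ≠ v)
    (h : transitionOf a v b = transitionOf c v d) : (a = c ∧ b = d) ∨ (a = d ∧ b = c) := by
  unfold transitionOf at h
  rw [Sym2.eq_iff] at h
  rcases h with ⟨h1, h2⟩ | ⟨h1, h2⟩ <;> rw [Sym2.eq_iff] at h1 h2 <;> tauto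

lemma transitionOf_center' {a b c d v w : V} (hav : a ≠ v) (hbv : b ≠ v) (hab : a ≠ b)
    (hcw : c ≠ w) (hdw : d ≠ w) (hcd : c ≠ d)
    (h : transitionOf a v b = transitionOf c w d) : v = w := by
  unfold transitionOf at h
  rw [Sym2.eq_iff] at h
  rcases h with ⟨h1, h2⟩ | ⟨h1, h2⟩ <;> rw [Sym2.eq_iff] at h1 h2 <;>
    rcases h1 with ⟨rfl, rfl⟩ | ⟨rfl, rfl⟩ <;> tauto

/-- A structurally recursive version of `TCompatible`. -/
def Compat (T : Set (Sym2 (Sym2 V))) : List V → Prop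
  | a :: b :: c :: l => (a = c ∨ transitionOf a b c ∈ T) ∧ Compat T (b :: c :: l)
  | _ => True

lemma tcompatible_of_compat (T : Set (Sym2 (Sym2 V))) :
    ∀ l : List V, Compat T l → TCompatible T l := by
  intro l
  induction l with
  | nil => intro _ i h; simp at h
  | cons a l ih =>
    intro hC i h
    match l, hC with
    | b :: c :: l', ⟨hw, hrest⟩ =>
      match i with
      | 0 => simpa using hw
      | (i+1) =>
        have := ih hrest i (by simpa using h)
        simpa using this

lemma chain_from_head' {R : V → V → Prop} (hrefl : ∀ x, R x x) :
    ∀ (L : List V) (x : V), List.Chain' R (x :: L) → ∀ b ∈ x :: L,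
      ∃ mid : List V, (∀ y ∈ mid, y ∈ x :: L) ∧ List.Chain R x (mid ++ [b]) := by
  intro L
  induction L with
  | nil =>
    intro x _ b hb
    simp only [List.mem_singleton] at hb
    subst hb
    exact ⟨[], by simp, List.IsChain.cons_cons (hrefl _) (List.IsChain.singleton _)⟩
  | cons y L ih =>
    intro x hch b hb
    rcases List.mem_cons.1 hb with rfl | hb'
    · exact ⟨[], by simp, List.IsChain.cons_cons (hrefl _) (List.IsChain.singleton _)⟩
    · simp only [List.Chain', List.isChain_cons_cons] at hch
      obtain ⟨mid, hmid, hchain⟩ := ih y hch.2 b hb'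
      exact ⟨y :: mid, by
        intro z hz
        rcases List.mem_cons.1 hz with rfl | hz'
        · simp
        · simp [hmid z hz'], List.Chain.cons hch.1 hchain⟩

lemma chain_between' {R : V → V → Prop} (hrefl : ∀ x, R x x)
    (hsymm : ∀ {x y : V}, R x y → R y x) :
    ∀ (L : List V), List.Chain' R L → ∀ a ∈ L, ∀ b ∈ L,
      ∃ mid, (∀ y ∈ mid, y ∈ L) ∧ List.Chain R a (mid ++ [b]) := by
  rintro (_ | ⟨x, L⟩) hch a ha b hb
  · simp at ha
  obtain ⟨m1, hm1, hc1⟩ := chain_from_head' hrefl L x hch a ha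
  obtain ⟨m2, hm2, hc2⟩ := chain_from_head' hrefl L x hch b hb
  have h1 : List.Chain' R (x :: (m1 ++ [a])) := hc1
  have h2 : List.Chain' (flip R) (x :: (m1 ++ [a])) := h1.imp fun {a b} h => hsymm h
  have h3 : List.Chain' R ((x :: (m1 ++ [a])).reverse) := List.isChain_reverse.mpr h2
  have h4 : (x :: (m1 ++ [a])).reverse = a :: (m1.reverse ++ [x]) := by simp
  rw [h4] at h3
  have hrev : List.Chain R a (m1.reverse ++ [x]) := h3
  refine ⟨m1.reverse ++ x :: m2, ?_, ?_⟩
  · intro y hy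
    rcases List.mem_append.1 hy with hy' | hy'
    · exact hm1 y (List.mem_reverse.1 hy')
    · rcases List.mem_cons.1 hy' with rfl | hy''
      · simp
      · exact hm2 y hy''
  · have : m1.reverse ++ x :: m2 ++ [b] = m1.reverse ++ x :: (m2 ++ [b]) := by simp
    rw [this]
    exact List.isChain_cons_split.mpr ⟨hrev, hc2⟩

lemma chain'_of_forall_zip' {R : V → V → Prop} :
    ∀ L : List V, (∀ p q : V, (p, q) ∈ L.zip L.tail → R p q) → List.Chain' R L := by
  intro L
  induction L with
  | nil => intro; exact List.IsChain.nil
  | cons x L ih =>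
    intro h
    match L with
    | [] => exact List.IsChain.singleton x
    | y :: L' =>
      simp only [List.Chain', List.isChain_cons_cons]
      constructor
      · exact h x y (by simp [List.zip_cons_cons])
      · refine ih fun p q hpq => h p q ?_
        simp only [List.tail_cons, List.zip_cons_cons]
        rcases L' with _ | ⟨z, L''⟩
        · simp at hpq
        · exact List.mem_cons_of_mem _ hpq

lemma rel_of_mem_zip' {R : V → V → Prop} :
    ∀ L : List V, List.Chain' R L → ∀ p q : V, (p, q) ∈ L.zip L.tail → R p q := by
  intro L
  induction L with
  | nil => intro _ p q h; simp at h
  | cons x L ih =>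
    intro hch p q hpq
    match L, hpq with
    | y :: L', hpq =>
      simp only [List.Chain', List.isChain_cons_cons] at hch
      simp only [List.tail_cons, List.zip_cons_cons, List.mem_cons] at hpq
      rcases hpq with h | h
      · obtain ⟨rfl, rfl⟩ := Prod.mk.injEq .. ▸ h
        exact hch.1
      · exact ih hch.2 p q h

lemma nodup_map_transition' {v : V} :
    ∀ L : List V, (∀ x ∈ L, x ≠ v) → L.Nodup →
    (List.map (fun p : V × V => transitionOf p.1 v p.2) (L.zip L.tail)).Nodup := by
  intro L
  induction L with
  | nil => intro _ _; simp
  | cons x L ih =>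
    intro hv hnd
    match L with
    | [] => simp
    | y :: L' =>
      simp only [List.tail_cons, List.zip_cons_cons, List.map_cons, List.nodup_cons]
      constructor
      · intro hmem
        obtain ⟨⟨p, q⟩, hzip, heq⟩ := List.mem_map.1 hmem
        obtain ⟨hp, hq⟩ := List.of_mem_zip hzip
        have hx : x ∉ y :: L' := (List.nodup_cons.1 hnd).1
        have := transitionOf_inj' (hv p (List.mem_cons_of_mem _ hp))
          (hv q (List.mem_cons_of_mem _ (List.mem_cons_of_mem _ hq)))
          (hv x List.mem_cons_self) (hv y (List.mem_cons_of_mem _ List.mem_cons_self))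
          heq
        rcases this with ⟨rfl, rfl⟩ | ⟨rfl, rfl⟩
        · exact hx hp
        · exact hx (List.mem_cons_of_mem _ hq)
      · exact ih (fun z hz => hv z (List.mem_cons_of_mem _ hz)) (List.nodup_cons.1 hnd).2

lemma walk_of_chain' {G : SimpleGraph V} {T : Set (Sym2 (Sym2 V))} {u v : V} :
    ∀ (mid : List V) (a b : V), (∀ x ∈ mid, G.Adj u x) →
    List.Chain (fun p q => p = q ∨ transitionOf p u q ∈ T) a (mid ++ [b]) →
    G.Adj u b → ∀ (q' : G.Walk b v), Compat T (u :: q'.support) →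
    ∃ q : G.Walk u v, Compat T (a :: q.support) := by
  intro mid
  induction mid with
  | nil =>
    intro a b _ hch hub q' hq'
    simp only [List.nil_append, List.Chain, List.isChain_cons_cons] at hch
    refine ⟨SimpleGraph.Walk.cons hub q', ?_⟩
    rw [SimpleGraph.Walk.support_cons, q'.support_eq_cons]
    exact ⟨hch.1, by rw [← q'.support_eq_cons]; exact hq'⟩
  | cons x mid ih =>
    intro a b hadj hch hub q' hq'
    simp only [List.cons_append, List.Chain, List.isChain_cons_cons] at hch
    have hux : G.Adj u x := hadj x (by simp)
    obtain ⟨q₀, hq₀⟩ := ih x b (fun y hy => hadj y (by simp [hy])) hch.2 hub q' hq'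
    refine ⟨SimpleGraph.Walk.cons hux (SimpleGraph.Walk.cons hux.symm q₀), ?_⟩
    rw [SimpleGraph.Walk.support_cons, SimpleGraph.Walk.support_cons, q₀.support_eq_cons]
    refine ⟨hch.1, ⟨Or.inl rfl, ?_⟩⟩
    rw [← q₀.support_eq_cons]
    exact hq₀

lemma walk_compat_aux' {G tG : SimpleGraph V} (hle : tG ≤ G) {T : Set (Sym2 (Sym2 V))}
    (hyp : ∀ u a b : V, tG.Adj u a → tG.Adj u b → ∃ mid : List V,
      (∀ x ∈ mid, tG.Adj u x) ∧
      List.Chain (fun p q => p = q ∨ transitionOf p u q ∈ T) a (mid ++ [b]))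
    {v : V} : ∀ {u : V} (p : tG.Walk u v) (a : V), tG.Adj a u →
      ∃ q : G.Walk u v, Compat T (a :: q.support) := by
  intro u p
  induction p with
  | nil => exact fun a _ => ⟨SimpleGraph.Walk.nil, by trivial⟩
  | @cons u b v hub p' ih =>
    intro a ha
    obtain ⟨q', hq'⟩ := ih u hub
    obtain ⟨mid, hmid, hch⟩ := hyp u a b ha.symm hub
    exact walk_of_chain' mid a b (fun x hx => hle (hmid x hx)) hch (hle hub) q' hq'

end AuxTransition

/-- Every connected graph with at least 2 vertices has a connecting transition set of
size `|V(G)| − 2`. -/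
theorem stmt3 {V : Type*} [Fintype V] [DecidableEq V] (G : SimpleGraph V)
    (hc : G.Connected) (h2 : 2 ≤ Fintype.card V) :
    ∃ T : Finset (Sym2 (Sym2 V)),
      G.ConnectingTransitionSet T ∧ T.card = Fintype.card V - 2 := by
  classical
  obtain ⟨r⟩ := hc.nonempty
  -- every non-root vertex has a parent closer to the root
  have hpar : ∀ v : V, v ≠ r → ∃ w, G.Adj v w ∧ G.dist r w + 1 = G.dist r v := by
    intro v hv
    have hreach : G.Reachable r v := hc.preconnected r v
    obtain ⟨p, hp⟩ := hreach.exists_walk_length_eq_dist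
    have hdpos : 0 < G.dist r v := by
      have : G.dist r v ≠ 0 :=
        SimpleGraph.dist_ne_zero_iff_ne_and_reachable.2 ⟨Ne.symm hv, hreach⟩
      omega
    have hrev : p.reverse.length = G.dist r v := by rw [SimpleGraph.Walk.length_reverse, hp]
    have hnn : ¬ p.reverse.Nil := SimpleGraph.Walk.not_nil_iff_lt_length.2 (by omega)
    set w : V := p.reverse.getVert 1 with hw
    have hadj : G.Adj v w := by
      have := p.reverse.adj_getVert_succ (i := 0) (by omega)
      simpa [hw] using this
    refine ⟨w, hadj, ?_⟩
    have h1 : G.dist r w ≤ p.reverse.tail.length := by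
      rw [SimpleGraph.dist_comm]
      exact SimpleGraph.dist_le p.reverse.tail
    have h2 : p.reverse.tail.length + 1 = p.reverse.length :=
      SimpleGraph.Walk.length_tail_add_one hnn
    have h3 : G.dist r v ≤ G.dist r w + 1 := by
      have ht := hc.dist_triangle (u := r) (v := w) (w := v)
      have : G.dist w v ≤ 1 :=
        SimpleGraph.dist_le (SimpleGraph.Walk.cons hadj.symm SimpleGraph.Walk.nil)
      omega
    omega
  set par : V → V := fun v => if h : v = r then r else Classical.choose (hpar v h) with hpardef
  have hpadj : ∀ v, v ≠ r → G.Adj v (par v) ∧ G.dist r (par v) + 1 = G.dist r v := by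
    intro v hv
    simp only [hpardef, dif_neg hv]
    exact Classical.choose_spec (hpar v hv)
  set S : Finset (Sym2 V) := (Finset.univ.erase r).image fun v => s(v, par v) with hS
  set tG : SimpleGraph V := SimpleGraph.fromEdgeSet ↑S with htG
  have htG_adj : ∀ {x y : V}, tG.Adj x y ↔ s(x, y) ∈ S ∧ x ≠ y := by
    intro x y
    rw [htG, SimpleGraph.fromEdgeSet_adj]
    simp
  have hle : tG ≤ G := by
    intro x y hxy
    rw [htG_adj] at hxy
    obtain ⟨hmem, hne⟩ := hxy
    simp only [hS, Finset.mem_image, Finset.mem_erase] at hmem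
    obtain ⟨w, ⟨hwr, _⟩, hw⟩ := hmem
    have hadj := (hpadj w hwr).1
    rw [Sym2.eq_iff] at hw
    rcases hw with ⟨rfl, rfl⟩ | ⟨rfl, rfl⟩
    · exact hadj
    · exact hadj.symm
  have htadj : ∀ v, v ≠ r → tG.Adj v (par v) := by
    intro v hv
    rw [htG_adj]
    exact ⟨Finset.mem_image.2 ⟨v, Finset.mem_erase.2 ⟨hv, Finset.mem_univ v⟩, rfl⟩,
      (hpadj v hv).1.ne⟩
  have hreach_r : ∀ n (v : V), G.dist r v ≤ n → tG.Reachable v r := by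
    intro n
    induction n with
    | zero =>
      intro v h
      have : r = v := hc.dist_eq_zero_iff.1 (Nat.le_zero.1 h)
      exact this ▸ SimpleGraph.Reachable.refl r
    | succ n ih =>
      intro v h
      by_cases hv : v = r
      · exact hv ▸ SimpleGraph.Reachable.refl v
      · have h1 := (hpadj v hv).2
        exact ((htadj v hv).reachable).trans (ih (par v) (by omega))
  have hreach : ∀ u v : V, tG.Reachable u v := fun u v =>
    (hreach_r _ u le_rfl).trans (hreach_r _ v le_rfl).symm
  -- edge count
  have hSdiag : ∀ e ∈ S, ¬ e.IsDiag := by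
    intro e he
    simp only [hS, Finset.mem_image, Finset.mem_erase] at he
    obtain ⟨w, ⟨hwr, _⟩, rfl⟩ := he
    simpa using (hpadj w hwr).1.ne
  have hcardS : S.card = Fintype.card V - 1 := by
    rw [hS, Finset.card_image_of_injOn, Finset.card_erase_of_mem (Finset.mem_univ r),
      Finset.card_univ]
    intro x hx y hy hxy
    simp only [Finset.coe_erase, Set.mem_diff, Finset.coe_univ, Set.mem_univ,
      Set.mem_singleton_iff, true_and] at hx hy
    rw [Sym2.eq_iff] at hxy
    rcases hxy with ⟨rfl, _⟩ | ⟨h1, h2⟩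
    · rfl
    · have ha := (hpadj x hx).2
      have hb := (hpadj y hy).2
      rw [← h1] at hb
      rw [h2] at ha
      omega
  have hdeg : ∀ v : V, 1 ≤ tG.degree v := by
    intro v
    obtain ⟨u, hu⟩ := Fintype.exists_ne_of_one_lt_card (by omega) v
    obtain ⟨p⟩ := hreach v u
    cases p with
    | nil => exact absurd rfl hu
    | cons h _ =>
      have := (tG.degree_pos_iff_exists_adj v).2 ⟨_, h⟩
      omega
  have hES : tG.edgeSet = ↑S := by
    rw [htG, SimpleGraph.edgeSet_fromEdgeSet]
    ext e
    simp only [Set.mem_diff, Finset.mem_coe, Set.mem_setOf_eq]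
    exact ⟨fun h => h.1, fun h => ⟨h, hSdiag e h⟩⟩
  have hsum : ∑ v : V, tG.degree v = 2 * (Fintype.card V - 1) := by
    rw [SimpleGraph.sum_degrees_eq_twice_card_edges]
    have key : ∀ (inst : Fintype tG.edgeSet), (@SimpleGraph.edgeFinset V tG inst).card = S.card := by
      intro inst
      have h1 : (@SimpleGraph.edgeFinset V tG inst).card = tG.edgeSet.ncard :=
        (@Set.ncard_eq_toFinset_card' _ tG.edgeSet inst).symm
      rw [h1, hES, Set.ncard_coe_finset]
    rw [key _, hcardS]
  -- neighbor lists
  set L : V → List V := fun v => (tG.neighborFinset v).toList with hL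
  have hLnodup : ∀ v, (L v).Nodup := fun v => Finset.nodup_toList _
  have hLmem : ∀ v x, x ∈ L v ↔ tG.Adj v x := by
    intro v x
    rw [hL]
    simp [Finset.mem_toList, SimpleGraph.mem_neighborFinset]
  have hLlen : ∀ v, (L v).length = tG.degree v := fun v => Finset.length_toList _
  -- the transition set
  set Tfin : Finset (Sym2 (Sym2 V)) := Finset.univ.biUnion fun v =>
    (((L v).zip (L v).tail).map fun p => transitionOf p.1 v p.2).toFinset with hTfin
  have hpairs : ∀ v p q, (p, q) ∈ (L v).zip (L v).tail →
      tG.Adj v p ∧ tG.Adj v q ∧ p ≠ q := by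
    intro v p q h
    have hm := List.of_mem_zip h
    refine ⟨(hLmem v p).1 hm.1, (hLmem v q).1 (List.mem_of_mem_tail hm.2), ?_⟩
    exact rel_of_mem_zip' (L v) ((hLnodup v).isChain) p q h
  have hmemT : ∀ v p q, (p, q) ∈ (L v).zip (L v).tail → transitionOf p v q ∈ Tfin := by
    intro v p q h
    rw [hTfin, Finset.mem_biUnion]
    exact ⟨v, Finset.mem_univ v, List.mem_toFinset.2 (List.mem_map.2 ⟨(p, q), h, rfl⟩)⟩
  have hTspec : ∀ e ∈ Tfin, ∃ v p q, e = transitionOf p v q ∧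
      tG.Adj v p ∧ tG.Adj v q ∧ p ≠ q := by
    intro e he
    rw [hTfin, Finset.mem_biUnion] at he
    obtain ⟨v, _, hm⟩ := he
    obtain ⟨⟨p, q⟩, hzip, rfl⟩ := List.mem_map.1 (List.mem_toFinset.1 hm)
    exact ⟨v, p, q, rfl, hpairs v p q hzip⟩
  -- cardinality
  have hcardT : Tfin.card = Fintype.card V - 2 := by
    rw [hTfin, Finset.card_biUnion]
    · have hterm : ∀ v : V,
          ((((L v).zip (L v).tail).map fun p => transitionOf p.1 v p.2).toFinset).card
            = tG.degree v - 1 := by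
        intro v
        rw [List.toFinset_card_of_nodup (nodup_map_transition' (L v)
          (fun x hx => ((hLmem v x).1 hx).ne') (hLnodup v))]
        rw [List.length_map, List.length_zip, List.length_tail, hLlen]
        omega
      rw [Finset.sum_congr rfl fun v _ => hterm v]
      have h1 : ∑ v : V, tG.degree v = ∑ v : V, ((tG.degree v - 1) + 1) :=
        Finset.sum_congr rfl fun v _ => by have := hdeg v; omega
      rw [Finset.sum_add_distrib, Finset.sum_const, Finset.card_univ, smul_eq_mul,
        mul_one] at h1
      omega
    · intro v _ w _ hvw
      rw [Function.onFun, Finset.disjoint_left]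
      intro e hev hew
      obtain ⟨⟨p, q⟩, hz1, rfl⟩ := List.mem_map.1 (List.mem_toFinset.1 hev)
      obtain ⟨⟨p', q'⟩, hz2, he'⟩ := List.mem_map.1 (List.mem_toFinset.1 hew)
      obtain ⟨ha1, ha2, hne⟩ := hpairs v p q hz1
      obtain ⟨hb1, hb2, hne'⟩ := hpairs w p' q' hz2
      exact hvw (transitionOf_center' ha1.ne' ha2.ne' hne hb1.ne' hb2.ne' hne' he'.symm)
  -- the interface for the walk construction
  have hyp : ∀ u a b : V, tG.Adj u a → tG.Adj u b → ∃ mid : List V,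
      (∀ x ∈ mid, tG.Adj u x) ∧
      List.Chain (fun p q => p = q ∨ transitionOf p u q ∈ (↑Tfin : Set (Sym2 (Sym2 V))))
        a (mid ++ [b]) := by
    intro u a b hua hub
    have hch : List.Chain' (fun p q => p = q ∨
        transitionOf p u q ∈ (↑Tfin : Set (Sym2 (Sym2 V)))) (L u) := by
      refine (chain'_of_forall_zip' (L u) ?_)
      intro p q h
      exact Or.inr (Finset.mem_coe.2 (hmemT u p q h))
    obtain ⟨mid, hmid, hchain⟩ := chain_between'
      (R := fun p q => p = q ∨ transitionOf p u q ∈ (↑Tfin : Set (Sym2 (Sym2 V))))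
      (fun x => Or.inl rfl)
      (fun {x y} h => by
        rcases h with rfl | h
        · exact Or.inl rfl
        · exact Or.inr (by rwa [transitionOf_comm']))
      (L u) hch a ((hLmem u a).2 hua) b ((hLmem u b).2 hub)
    exact ⟨mid, fun x hx => (hLmem u x).1 (hmid x hx), hchain⟩
  refine ⟨Tfin, ⟨?_, ?_⟩, hcardT⟩
  · intro e he
    obtain ⟨v, p, q, rfl, ha1, ha2, hne⟩ := hTspec e he
    exact ⟨p, v, q, (hle ha1).symm, hle ha2, hne, rfl⟩
  · intro u v
    obtain ⟨p⟩ := hreach u v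
    cases p with
    | nil => exact ⟨SimpleGraph.Walk.nil, by intro i h; simp at h⟩
    | @cons _ b _ h p' =>
      obtain ⟨q', hq'⟩ := walk_compat_aux' hle hyp p' u h
      refine ⟨SimpleGraph.Walk.cons (hle h) q', ?_⟩
      rw [SimpleGraph.Walk.support_cons]
      exact tcompatible_of_compat _ _ hq'
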